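/- If n ≥ 11, then in any majority dominator coloring of the path P_n using the minimum number χ_md(P_n) of colors, at least two colors appear on at most two vertices each. -/
import Mathlib


open SimpleGraph

/-- A majority dominator coloring: a proper coloring such that every vertex `v`
dominates at least half of some (nonempty) color class, i.e. there is a color class `C`
with `|C| ≤ 2 * |C ∩ N[v]|`. -/
def SimpleGraph.IsMajorityDominatorColoring {V : Type*} (G : SimpleGraph V) {k : ℕ}
    (c : V → Fin k) : Prop :=
  (∀ u v, G.Adj u v → c u ≠ c v) ∧
  ∀ v : V, ∃ i : Fin k,
    {u | c u = i}.Nonempty ∧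
    {u | c u = i}.ncard ≤ 2 * {u | c u = i ∧ (u = v ∨ G.Adj v u)}.ncard

/-- The majority dominator chromatic number. -/
noncomputable def SimpleGraph.majorityDominatorChromaticNumber {V : Type*}
    (G : SimpleGraph V) : ℕ :=
  sInf {k | ∃ c : V → Fin k, G.IsMajorityDominatorColoring c}

private lemma ncard_le_two_of_pair {α : Type*} [Finite α] {s : Set α} {a b : α}
    (h : s ⊆ {a, b}) : s.ncard ≤ 2 := by
  calc s.ncard ≤ ({a, b} : Set α).ncard := Set.ncard_le_ncard h (Set.toFinite _)
    _ ≤ ({b} : Set α).ncard + 1 := Set.ncard_insert_le a {b}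
    _ = 2 := by rw [Set.ncard_singleton]

private lemma five_le_ncard {α : Type*} [Finite α] {s : Set α} {p q r t w : α}
    (h1 : p ≠ q) (h2 : p ≠ r) (h3 : p ≠ t) (h4 : p ≠ w)
    (h5 : q ≠ r) (h6 : q ≠ t) (h7 : q ≠ w)
    (h8 : r ≠ t) (h9 : r ≠ w) (h10 : t ≠ w)
    (hsub : ({p, q, r, t, w} : Set α) ⊆ s) : 5 ≤ s.ncard := by
  have e : ({p, q, r, t, w} : Set α).ncard = 5 := by
    rw [Set.ncard_insert_of_notMem (by simp [h1, h2, h3, h4]) (Set.toFinite _),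
        Set.ncard_insert_of_notMem (by simp [h5, h6, h7]) (Set.toFinite _),
        Set.ncard_insert_of_notMem (by simp [h8, h9]) (Set.toFinite _),
        Set.ncard_pair h10]
  calc 5 = ({p, q, r, t, w} : Set α).ncard := e.symm
    _ ≤ s.ncard := Set.ncard_le_ncard hsub (Set.toFinite _)

/-- Endpoint vertices force a small (size ≤ 2) color class meeting their closed
neighborhood. -/
private lemma endpoint_small {n k : ℕ} {c : Fin n → Fin k}
    (hc : (pathGraph n).IsMajorityDominatorColoring c) (hn : 3 ≤ n) (v : Fin n)
    (hv : (v : ℕ) = 0 ∨ (v : ℕ) = n - 1) :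
    ∃ i : Fin k, ∃ a : Fin n, c a = i ∧ {u | c u = i}.Nonempty ∧
      {u | c u = i}.ncard ≤ 2 ∧
      ((a : ℕ) = (v : ℕ) ∨ (a : ℕ) + 1 = (v : ℕ) ∨ (a : ℕ) = (v : ℕ) + 1) := by
  obtain ⟨i, hne, hcard⟩ := hc.2 v
  set W := {u | c u = i ∧ (u = v ∨ (pathGraph n).Adj v u)} with hW
  have hWmem : ∀ u ∈ W, (u : ℕ) = (v : ℕ) ∨ (u : ℕ) + 1 = (v : ℕ) ∨
      (u : ℕ) = (v : ℕ) + 1 := by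
    rintro u ⟨hcu, (rfl | hadj)⟩
    · left; rfl
    · rw [pathGraph_adj] at hadj; omega
  have key : ∀ u ∈ W, ∀ u' ∈ W, u = u' := by
    intro u hu u' hu'
    by_contra hne'
    have hval : (u : ℕ) ≠ (u' : ℕ) := fun h => hne' (Fin.ext h)
    have h1 := hWmem u hu
    have h2 := hWmem u' hu'
    have hvn : (v : ℕ) < n := v.isLt
    have hun : (u : ℕ) < n := u.isLt
    have hun' : (u' : ℕ) < n := u'.isLt
    have hadj : (pathGraph n).Adj u u' := by
      rw [pathGraph_adj]; omega
    exact hc.1 u u' hadj (hu.1.trans hu'.1.symm)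
  have hcl1 : 0 < {u | c u = i}.ncard := (Set.ncard_pos (Set.toFinite _)).mpr hne
  have hWne : W.Nonempty := by
    apply Set.nonempty_of_ncard_ne_zero
    omega
  obtain ⟨a, ha⟩ := hWne
  have hWsub : W ⊆ {a} := fun u hu => key u hu a ha
  have hW1 : W.ncard ≤ 1 := by
    calc W.ncard ≤ ({a} : Set (Fin n)).ncard := Set.ncard_le_ncard hWsub (Set.toFinite _)
      _ = 1 := Set.ncard_singleton a
  exact ⟨i, a, ha.1, hne, by omega, hWmem a ha⟩

/-- Middle vertices force their two neighbors to share a color, whose class has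
size at most 4. -/
private lemma middle_step {n k : ℕ} {c : Fin n → Fin k}
    (hc : (pathGraph n).IsMajorityDominatorColoring c)
    {i0 : Fin k} (hT : ∀ i : Fin k, {u | c u = i}.Nonempty → {u | c u = i}.ncard ≤ 2 → i = i0)
    {a b : Fin n} (hcl : {u | c u = i0} = {a, b}) (ha : (a : ℕ) ≤ 1) (hb : n - 2 ≤ (b : ℕ))
    (hn : 11 ≤ n) (j : ℕ) (h2 : 2 ≤ j) (h5 : j + 5 ≤ n) :
    c ⟨j, by omega⟩ = c ⟨j + 2, by omega⟩ ∧ {u | c u = c ⟨j, by omega⟩}.ncard ≤ 4 := by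
  have hjn : j < n := by omega
  have hj1n : j + 1 < n := by omega
  have hj2n : j + 2 < n := by omega
  obtain ⟨i, hne, hcard⟩ := hc.2 ⟨j + 1, hj1n⟩
  set W := {u | c u = i ∧ (u = ⟨j + 1, hj1n⟩ ∨ (pathGraph n).Adj ⟨j + 1, hj1n⟩ u)} with hWdef
  have hWmem : ∀ u ∈ W, (u : ℕ) = j ∨ (u : ℕ) = j + 1 ∨ (u : ℕ) = j + 2 := by
    rintro u ⟨hcu, (rfl | hadj)⟩
    · right; left; rfl
    · rw [pathGraph_adj] at hadj
      simp only [Fin.val_mk] at hadj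
      omega
  -- i ≠ i0
  have hii0 : i ≠ i0 := by
    intro heq
    have hWempty : W = ∅ := by
      ext u
      simp only [Set.mem_empty_iff_false, iff_false]
      intro hu
      have hu0 : u ∈ ({a, b} : Set (Fin n)) := hcl ▸ (hu.1.trans heq)
      have hval := hWmem u hu
      rcases hu0 with rfl | rfl <;> omega
    rw [hWempty, Set.ncard_empty, Nat.mul_zero, Nat.le_zero] at hcard
    have : 0 < {u | c u = i}.ncard := (Set.ncard_pos (Set.toFinite _)).mpr hne
    omega
  -- class i has at least 3 elements
  have h3 : 3 ≤ {u | c u = i}.ncard := by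
    by_contra h
    push_neg at h
    exact hii0 (hT i hne (by omega))
  -- the middle vertex itself is not in W
  have hvW : (⟨j + 1, hj1n⟩ : Fin n) ∉ W := by
    intro hvmem
    have hWsub : W ⊆ {⟨j + 1, hj1n⟩} := by
      rintro u ⟨hcu, (rfl | hadj)⟩
      · rfl
      · exact absurd (hcu.trans hvmem.1.symm) (hc.1 _ u hadj).symm
    have hle : W.ncard ≤ 1 := by
      calc W.ncard ≤ ({(⟨j + 1, hj1n⟩ : Fin n)} : Set (Fin n)).ncard :=
            Set.ncard_le_ncard hWsub (Set.toFinite _)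
        _ = 1 := Set.ncard_singleton _
    omega
  have hWsub : W ⊆ {⟨j, hjn⟩, ⟨j + 2, hj2n⟩} := by
    intro u hu
    rcases hWmem u hu with h | h | h
    · exact Or.inl (Fin.ext (by simp only [Fin.val_mk]; omega))
    · have : u = ⟨j + 1, hj1n⟩ := Fin.ext (by simp only [Fin.val_mk]; omega)
      exact absurd (this ▸ hu) hvW
    · exact Or.inr (Fin.ext (by simp only [Fin.val_mk]; omega))
  have hW2 : W.ncard ≤ 2 := ncard_le_two_of_pair hWsub
  have hWge : 2 ≤ W.ncard := by omega
  have hvmvp : (⟨j, hjn⟩ : Fin n) ≠ ⟨j + 2, hj2n⟩ := by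
    simp only [ne_eq, Fin.mk.injEq]; omega
  have hWeq : W = {⟨j, hjn⟩, ⟨j + 2, hj2n⟩} := by
    apply Set.eq_of_subset_of_ncard_le hWsub _ (Set.toFinite _)
    rw [Set.ncard_pair hvmvp]; exact hWge
  have hvmW : (⟨j, hjn⟩ : Fin n) ∈ W := hWeq ▸ Set.mem_insert _ _
  have hvpW : (⟨j + 2, hj2n⟩ : Fin n) ∈ W := hWeq ▸ Set.mem_insert_of_mem _ rfl
  exact ⟨hvmW.1.trans hvpW.1.symm, by rw [show c ⟨j, hjn⟩ = i from hvmW.1]; omega⟩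

theorem path_md_coloring_at_least_two_small_classes (n k : ℕ) (hn : 11 ≤ n)
    (hk : k = (pathGraph n).majorityDominatorChromaticNumber)
    (c : Fin n → Fin k) (hc : (pathGraph n).IsMajorityDominatorColoring c) :
    2 ≤ {i : Fin k | {u | c u = i}.Nonempty ∧ {u | c u = i}.ncard ≤ 2}.ncard := by
  clear hk
  by_contra hcon
  push_neg at hcon
  set T := {i : Fin k | {u | c u = i}.Nonempty ∧ {u | c u = i}.ncard ≤ 2} with hTdef
  have hT1 : T.ncard ≤ 1 := by omega
  have h0n : (0 : ℕ) < n := by omega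
  have h2n : (2 : ℕ) < n := by omega
  have h3n : (3 : ℕ) < n := by omega
  have h4n : (4 : ℕ) < n := by omega
  have h5n : (5 : ℕ) < n := by omega
  have h6n : (6 : ℕ) < n := by omega
  have h7n : (7 : ℕ) < n := by omega
  have h8n : (8 : ℕ) < n := by omega
  -- endpoint 0
  obtain ⟨i0, a, hca, hne0, hcard0, hapos⟩ :=
    endpoint_small hc (by omega) ⟨0, h0n⟩ (Or.inl rfl)
  have ha : (a : ℕ) ≤ 1 := by
    have h' : (a : ℕ) = 0 ∨ (a : ℕ) + 1 = 0 ∨ (a : ℕ) = 0 + 1 := hapos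
    omega
  have hi0T : i0 ∈ T := ⟨hne0, hcard0⟩
  -- uniqueness of the small class
  have hT : ∀ i : Fin k, {u | c u = i}.Nonempty → {u | c u = i}.ncard ≤ 2 → i = i0 := by
    intro i h1 h2
    by_contra hne
    have hsub : ({i, i0} : Set (Fin k)) ⊆ T := by
      rintro x (rfl | rfl)
      · exact ⟨h1, h2⟩
      · exact hi0T
    have : ({i, i0} : Set (Fin k)).ncard ≤ T.ncard :=
      Set.ncard_le_ncard hsub (Set.toFinite _)
    rw [Set.ncard_pair hne] at this
    omega
  -- endpoint n-1
  obtain ⟨i1, b, hcb, hne1, hcard1, hbpos⟩ :=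
    endpoint_small hc (by omega) ⟨n - 1, by omega⟩ (Or.inr rfl)
  have hb : n - 2 ≤ (b : ℕ) := by
    have h' : (b : ℕ) = n - 1 ∨ (b : ℕ) + 1 = n - 1 ∨ (b : ℕ) = n - 1 + 1 := hbpos
    have h2' : (b : ℕ) < n := b.isLt
    omega
  have hbn : (b : ℕ) < n := b.isLt
  have hi1 : i1 = i0 := hT i1 hne1 hcard1
  rw [hi1] at hcb
  -- the small class is exactly {a, b}
  have hab : a ≠ b := by
    intro h
    have : (a : ℕ) = (b : ℕ) := h ▸ rfl
    omega
  have hcl : {u | c u = i0} = {a, b} := by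
    symm
    apply Set.eq_of_subset_of_ncard_le _ _ (Set.toFinite _)
    · rintro x (rfl | rfl)
      · exact hca
      · exact hcb
    · rw [Set.ncard_pair hab]; exact hcard0
  -- middle steps
  have hmid := fun (j : ℕ) (hj2 : 2 ≤ j) (hj5 : j + 5 ≤ n) =>
    middle_step hc hT hcl ha hb hn j hj2 hj5
  -- parity chain
  have hchain : ∀ j : ℕ, 2 ≤ j → j + 3 ≤ n → ∀ (hj : j < n) (hj' : j % 2 + 2 < n),
      c ⟨j, hj⟩ = c ⟨j % 2 + 2, hj'⟩ := by
    intro j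
    induction j using Nat.strong_induction_on with
    | _ j ih =>
      intro hj2 hj3 hj hj'
      rcases lt_or_ge j 4 with h4 | h4
      · have : c ⟨j, hj⟩ = c ⟨j, hj⟩ := rfl
        have hcast : (⟨j % 2 + 2, hj'⟩ : Fin n) = ⟨j, hj⟩ :=
          Fin.ext (by simp only [Fin.val_mk]; omega)
        rw [hcast]
      · have e1 := (hmid (j - 2) (by omega) (by omega)).1
        have e2 := ih (j - 2) (by omega) (by omega) (by omega) (by omega) (by omega)
        have hcast1 : (⟨j - 2 + 2, by omega⟩ : Fin n) = ⟨j, hj⟩ :=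
          Fin.ext (by simp only [Fin.val_mk]; omega)
        have hcast2 : (⟨(j - 2) % 2 + 2, by omega⟩ : Fin n) = ⟨j % 2 + 2, hj'⟩ :=
          Fin.ext (by simp only [Fin.val_mk]; omega)
        rw [hcast1] at e1
        rw [hcast2] at e2
        exact e1.symm.trans e2
  -- class size bounds for the two parity colors
  have hcl2 : {u | c u = c ⟨2, h2n⟩}.ncard ≤ 4 := (hmid 2 (by omega) (by omega)).2
  have hcl3 : {u | c u = c ⟨3, h3n⟩}.ncard ≤ 4 := (hmid 3 (by omega) (by omega)).2
  -- membership facts from the chain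
  have hmem2 : ∀ j : ℕ, 2 ≤ j → j + 3 ≤ n → j % 2 = 0 → ∀ (hj : j < n),
      c ⟨j, hj⟩ = c ⟨2, h2n⟩ := by
    intro j h1 h2 h3 hj
    have := hchain j h1 h2 hj (by omega)
    rwa [show (⟨j % 2 + 2, by omega⟩ : Fin n) = ⟨2, h2n⟩ from
      Fin.ext (by simp only [Fin.val_mk]; omega)] at this
  have hmem3 : ∀ j : ℕ, 2 ≤ j → j + 3 ≤ n → j % 2 = 1 → ∀ (hj : j < n),
      c ⟨j, hj⟩ = c ⟨3, h3n⟩ := by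
    intro j h1 h2 h3 hj
    have := hchain j h1 h2 hj (by omega)
    rwa [show (⟨j % 2 + 2, by omega⟩ : Fin n) = ⟨3, h3n⟩ from
      Fin.ext (by simp only [Fin.val_mk]; omega)] at this
  -- the two leftover end vertices
  have hxlt : 1 - (a : ℕ) < n := by omega
  have hylt : (n - 2) + (n - 1) - (b : ℕ) < n := by omega
  -- any vertex not colored i0, c2, c3 lies in {x, y}
  have hcover : ∀ u : Fin n, c u ≠ i0 → c u ≠ c ⟨2, h2n⟩ → c u ≠ c ⟨3, h3n⟩ →
      u = ⟨1 - (a : ℕ), hxlt⟩ ∨ u = ⟨(n - 2) + (n - 1) - (b : ℕ), hylt⟩ := by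
    intro u h0 h2' h3'
    have hu : (u : ℕ) < n := u.isLt
    have hnota : u ≠ a := fun h => h0 (h ▸ hca)
    have hnotb : u ≠ b := fun h => h0 (h ▸ hcb)
    have hnotmid : ¬(2 ≤ (u : ℕ) ∧ (u : ℕ) + 3 ≤ n) := by
      rintro ⟨hu1, hu2⟩
      rcases Nat.mod_two_eq_zero_or_one (u : ℕ) with hpar | hpar
      · exact h2' (hmem2 (u : ℕ) hu1 hu2 hpar u.isLt)
      · exact h3' (hmem3 (u : ℕ) hu1 hu2 hpar u.isLt)
    push_neg at hnotmid
    have hav : (a : ℕ) < n := a.isLt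
    have huvala : (u : ℕ) ≠ (a : ℕ) := fun h => hnota (Fin.ext h)
    have huvalb : (u : ℕ) ≠ (b : ℕ) := fun h => hnotb (Fin.ext h)
    have hval : (u : ℕ) = 1 - (a : ℕ) ∨ (u : ℕ) = (n - 2) + (n - 1) - (b : ℕ) := by
      omega
    rcases hval with h | h
    · exact Or.inl (Fin.ext (by simp only [Fin.val_mk]; omega))
    · exact Or.inr (Fin.ext (by simp only [Fin.val_mk]; omega))
  -- memberships of 4, 6, 8 in class of color of 2, and 5, 7 in class of color of 3
  have hm4 : c ⟨4, h4n⟩ = c ⟨2, h2n⟩ := hmem2 4 (by omega) (by omega) (by omega) h4n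
  have hm6 : c ⟨6, h6n⟩ = c ⟨2, h2n⟩ := hmem2 6 (by omega) (by omega) (by omega) h6n
  have hm8 : c ⟨8, h8n⟩ = c ⟨2, h2n⟩ := hmem2 8 (by omega) (by omega) (by omega) h8n
  have hm5 : c ⟨5, h5n⟩ = c ⟨3, h3n⟩ := hmem3 5 (by omega) (by omega) (by omega) h5n
  have hm7 : c ⟨7, h7n⟩ = c ⟨3, h3n⟩ := hmem3 7 (by omega) (by omega) (by omega) h7n
  -- an end vertex z (val ≤ 1 or ≥ n-2, z ∉ {a,b}) cannot be colored c2
  have hendnot2 : ∀ z : Fin n, ((z : ℕ) ≤ 1 ∨ n - 2 ≤ (z : ℕ)) → c z ≠ c ⟨2, h2n⟩ := by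
    intro z hz hcz
    have hzn : (z : ℕ) < n := z.isLt
    have h5le : 5 ≤ {u | c u = c ⟨2, h2n⟩}.ncard := by
      apply five_le_ncard (p := z) (q := ⟨2, h2n⟩) (r := ⟨4, h4n⟩) (t := ⟨6, h6n⟩)
        (w := ⟨8, h8n⟩)
      · intro h; have := congrArg Fin.val h; simp only [Fin.val_mk] at this; omega
      · intro h; have := congrArg Fin.val h; simp only [Fin.val_mk] at this; omega
      · intro h; have := congrArg Fin.val h; simp only [Fin.val_mk] at this; omega
      · intro h; have := congrArg Fin.val h; simp only [Fin.val_mk] at this; omega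
      · simp only [ne_eq, Fin.mk.injEq]; omega
      · simp only [ne_eq, Fin.mk.injEq]; omega
      · simp only [ne_eq, Fin.mk.injEq]; omega
      · simp only [ne_eq, Fin.mk.injEq]; omega
      · simp only [ne_eq, Fin.mk.injEq]; omega
      · simp only [ne_eq, Fin.mk.injEq]; omega
      · rintro u (rfl | rfl | rfl | rfl | rfl)
        exacts [hcz, rfl, hm4, hm6, hm8]
    omega
  -- an end vertex z not in {a, b} must be colored c3
  have hendc3 : ∀ z : Fin n, ((z : ℕ) ≤ 1 ∨ n - 2 ≤ (z : ℕ)) → z ≠ a → z ≠ b →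
      c z = c ⟨3, h3n⟩ := by
    intro z hz hza hzb
    by_contra h3'
    have h0' : c z ≠ i0 := by
      intro h
      have : z ∈ ({a, b} : Set (Fin n)) := hcl ▸ h
      rcases this with h' | h'
      · exact hza h'
      · exact hzb h'
    have h2' : c z ≠ c ⟨2, h2n⟩ := hendnot2 z hz
    -- the class of c z is contained in {x, y}
    have hsub : {u | c u = c z} ⊆
        {⟨1 - (a : ℕ), hxlt⟩, ⟨(n - 2) + (n - 1) - (b : ℕ), hylt⟩} := by
      intro u hu
      have hu' : c u = c z := hu
      exact hcover u (hu' ▸ h0') (hu' ▸ h2') (hu' ▸ h3')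
    have : c z = i0 := hT (c z) ⟨z, rfl⟩ (ncard_le_two_of_pair hsub)
    exact h0' this
  -- apply to the two leftover end vertices x and y
  have hxa : (⟨1 - (a : ℕ), hxlt⟩ : Fin n) ≠ a := by
    intro h
    have := congrArg Fin.val h
    simp only [Fin.val_mk] at this
    omega
  have hxb : (⟨1 - (a : ℕ), hxlt⟩ : Fin n) ≠ b := by
    intro h
    have := congrArg Fin.val h
    simp only [Fin.val_mk] at this
    omega
  have hya : (⟨(n - 2) + (n - 1) - (b : ℕ), hylt⟩ : Fin n) ≠ a := by
    intro h
    have := congrArg Fin.val h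
    simp only [Fin.val_mk] at this
    omega
  have hyb : (⟨(n - 2) + (n - 1) - (b : ℕ), hylt⟩ : Fin n) ≠ b := by
    intro h
    have := congrArg Fin.val h
    simp only [Fin.val_mk] at this
    omega
  have hx3 : c ⟨1 - (a : ℕ), hxlt⟩ = c ⟨3, h3n⟩ :=
    hendc3 _ (by simp only [Fin.val_mk]; omega) hxa hxb
  have hy3 : c ⟨(n - 2) + (n - 1) - (b : ℕ), hylt⟩ = c ⟨3, h3n⟩ :=
    hendc3 _ (by simp only [Fin.val_mk]; omega) hya hyb
  -- final contradiction: class of c3 has ≥ 5 elements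
  have hfinal : 5 ≤ {u | c u = c ⟨3, h3n⟩}.ncard := by
    apply five_le_ncard (p := ⟨1 - (a : ℕ), hxlt⟩)
      (q := ⟨(n - 2) + (n - 1) - (b : ℕ), hylt⟩)
      (r := ⟨3, h3n⟩) (t := ⟨5, h5n⟩) (w := ⟨7, h7n⟩)
    · simp only [ne_eq, Fin.mk.injEq]; omega
    · simp only [ne_eq, Fin.mk.injEq]; omega
    · simp only [ne_eq, Fin.mk.injEq]; omega
    · simp only [ne_eq, Fin.mk.injEq]; omega
    · simp only [ne_eq, Fin.mk.injEq]; omega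
    · simp only [ne_eq, Fin.mk.injEq]; omega
    · simp only [ne_eq, Fin.mk.injEq]; omega
    · simp only [ne_eq, Fin.mk.injEq]; omega
    · simp only [ne_eq, Fin.mk.injEq]; omega
    · simp only [ne_eq, Fin.mk.injEq]; omega
    · rintro u (rfl | rfl | rfl | rfl | rfl)
      exacts [hx3, hy3, rfl, hm5, hm7]
  omega
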